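/- For every word X in {D,E,A}* of length n with r A's, the weight generating function of multi-Catalan tableaux satisfies: if X = X'·D·E·X'' then weight(X) = αβ·(weight(X'·D·X'') + weight(X'·E·X'')). -/
import Mathlib


inductive MSym : Type
  | a | b | x
deriving DecidableEq

inductive Letter : Type
  | D | E | A
deriving DecidableEq

/-- The content of the diagonal box of row `i` in a staircase filling of size `n`
(boxes `(i, j)` with `i + j < n`; the diagonal box of row `i` is `(i, n-1-i)`). -/
def diagRow (n : ℕ) (F : Fin n → Fin n → Option MSym) (i : Fin n) : Option MSym :=
  F i ⟨n - 1 - (i : ℕ), by have := i.isLt; omega⟩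

def diagCol (n : ℕ) (F : Fin n → Fin n → Option MSym) (j : Fin n) : Option MSym :=
  F ⟨n - 1 - (j : ℕ), by have := j.isLt; omega⟩ j

/-- A box is forced to be empty if there is a `β` to its right in its row or an `α`
below it in its column. -/
def ForcedEmpty (n : ℕ) (F : Fin n → Fin n → Option MSym) (i j : Fin n) : Prop :=
  (∃ j' : Fin n, j < j' ∧ F i j' = some MSym.b) ∨ (∃ i' : Fin n, i < i' ∧ F i' j = some MSym.a)

/-- A multi-Catalan tableau of size `n`: every box on the diagonal is filled (α, β or x);
a box left of a β in its row or above an α in its column is empty; a non-forced box in a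
D-row and E-column contains α or β; in a D-row and A-column contains β; in an A-row and
E-column contains α; every other box is empty. -/
def IsMCT (n : ℕ) (F : Fin n → Fin n → Option MSym) : Prop :=
  (∀ i j : Fin n, n ≤ (i : ℕ) + (j : ℕ) → F i j = none) ∧
  (∀ i : Fin n, diagRow n F i ≠ none) ∧
  (∀ i j : Fin n, (i : ℕ) + (j : ℕ) < n - 1 →
    (ForcedEmpty n F i j → F i j = none) ∧
    (¬ ForcedEmpty n F i j →
      match diagRow n F i, diagCol n F j with
      | some MSym.a, some MSym.b => F i j = some MSym.a ∨ F i j = some MSym.b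
      | some MSym.a, some MSym.x => F i j = some MSym.b
      | some MSym.x, some MSym.b => F i j = some MSym.a
      | _, _ => F i j = none))

def symToLetter : Option MSym → Letter
  | some MSym.a => Letter.D
  | some MSym.b => Letter.E
  | _ => Letter.A

/-- The type of a tableau: the word in {D, E, A} read off the diagonal from top to bottom. -/
def typeWord (n : ℕ) (F : Fin n → Fin n → Option MSym) : List Letter :=
  List.ofFn fun i : Fin n => symToLetter (diagRow n F i)

def countSym (n : ℕ) (F : Fin n → Fin n → Option MSym) (s : MSym) : ℕ :=
  (Finset.univ.filter fun p : Fin n × Fin n => F p.1 p.2 = some s).card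

/-- The weight of a tableau: the product of all its α's and β's. -/
noncomputable def wt (n : ℕ) (α β : ℝ) (F : Fin n → Fin n → Option MSym) : ℝ :=
  α ^ countSym n F MSym.a * β ^ countSym n F MSym.b

/-- The weight generating function of a word: the sum of the weights over all
multi-Catalan tableaux of that type. -/
noncomputable def wordWeight (α β : ℝ) (X : List Letter) : ℝ :=
  ∑ᶠ T : {F : Fin X.length → Fin X.length → Option MSym //
      IsMCT X.length F ∧ typeWord X.length F = X}, wt X.length α β T.1

namespace WW

def rI (m d : ℕ) (i : Fin m) : Fin (m+1) := ⟨if (i:ℕ) < d then (i:ℕ) else (i:ℕ)+1, by split <;> omega⟩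
def cI (m d : ℕ) (j : Fin m) : Fin (m+1) := ⟨if (j:ℕ) < m - d then (j:ℕ) else (j:ℕ)+1, by split <;> omega⟩

lemma rI_val (m d : ℕ) (i : Fin m) : (rI m d i : ℕ) = if (i:ℕ) < d then (i:ℕ) else (i:ℕ)+1 := rfl
lemma cI_val (m d : ℕ) (j : Fin m) : (cI m d j : ℕ) = if (j:ℕ) < m - d then (j:ℕ) else (j:ℕ)+1 := rfl

lemma rI_ne (m d : ℕ) (i : Fin m) : (rI m d i : ℕ) ≠ d := by
  simp only [rI_val]; split <;> omega

lemma cI_ne (m d : ℕ) (j : Fin m) : (cI m d j : ℕ) ≠ m - d := by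
  simp only [cI_val]; split <;> omega

lemma rI_lt_iff (m d : ℕ) (i i' : Fin m) : rI m d i < rI m d i' ↔ i < i' := by
  simp only [Fin.lt_def, rI_val]; split <;> split <;> omega

lemma cI_lt_iff (m d : ℕ) (j j' : Fin m) : cI m d j < cI m d j' ↔ j < j' := by
  simp only [Fin.lt_def, cI_val]; split <;> split <;> omega

/-- deletion of the cross through the diagonal box of row `d`. -/
def delT (m d : ℕ) (F : Fin (m+1) → Fin (m+1) → Option MSym) : Fin m → Fin m → Option MSym :=
  fun i j => F (rI m d i) (cI m d j)

lemma diagRow_delT (m d : ℕ) (hd : d ≤ m) (F : Fin (m+1) → Fin (m+1) → Option MSym) (i : Fin m) :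
    diagRow m (delT m d F) i = diagRow (m+1) F (rI m d i) := by
  have hi := i.isLt
  show F (rI m d i) (cI m d ⟨m-1-(i:ℕ), by omega⟩) = F (rI m d i) ⟨m+1-1-((rI m d i:ℕ)), by omega⟩
  congr 1
  apply Fin.ext
  simp only [cI_val, rI_val]
  split <;> split <;> omega

lemma diagCol_delT (m d : ℕ) (hd : d ≤ m) (F : Fin (m+1) → Fin (m+1) → Option MSym) (j : Fin m) :
    diagCol m (delT m d F) j = diagCol (m+1) F (cI m d j) := by
  have hj := j.isLt
  show F (rI m d ⟨m-1-(j:ℕ), by omega⟩) (cI m d j) = F ⟨m+1-1-((cI m d j:ℕ)), by omega⟩ (cI m d j)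
  congr 1
  apply Fin.ext
  simp only [cI_val, rI_val]
  split <;> split <;> omega

end WW
namespace WW

lemma forcedEmpty_delT (m d : ℕ) (hd : d ≤ m) (F : Fin (m+1) → Fin (m+1) → Option MSym)
    (hrow : ∀ j : Fin (m+1), (j:ℕ) ≠ m - d → F ⟨d, by omega⟩ j ≠ some MSym.a)
    (hcol : ∀ i : Fin (m+1), (i:ℕ) ≠ d → F i ⟨m - d, by omega⟩ ≠ some MSym.b)
    (i j : Fin m) :
    ForcedEmpty m (delT m d F) i j ↔ ForcedEmpty (m+1) F (rI m d i) (cI m d j) := by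
  constructor
  · rintro (⟨j', hjj, hb⟩ | ⟨i', hii, ha⟩)
    · exact Or.inl ⟨cI m d j', (cI_lt_iff m d j j').2 hjj, hb⟩
    · exact Or.inr ⟨rI m d i', (rI_lt_iff m d i i').2 hii, ha⟩
  · rintro (⟨j', hjj, hb⟩ | ⟨i', hii, ha⟩)
    · have hj' := j'.isLt
      have hne : (j':ℕ) ≠ m - d := by
        intro h
        have : j' = (⟨m - d, by omega⟩ : Fin (m+1)) := Fin.ext h
        rw [this] at hb
        exact hcol (rI m d i) (rI_ne m d i) hb
      have hlt : (cI m d j : ℕ) < (j' : ℕ) := hjj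
      rw [cI_val] at hlt
      refine Or.inl ⟨⟨if (j':ℕ) < m - d then (j':ℕ) else (j':ℕ) - 1, by split <;> omega⟩, ?_, ?_⟩
      · rw [Fin.lt_def]
        simp only
        split at hlt <;> split <;> omega
      · have : cI m d ⟨if (j':ℕ) < m - d then (j':ℕ) else (j':ℕ) - 1, by split <;> omega⟩ = j' := by
          apply Fin.ext
          simp only [cI_val, Fin.val_mk]
          split <;> (try split) <;> omega
        rw [delT, this]
        exact hb
    · have hi' := i'.isLt
      have hne : (i':ℕ) ≠ d := by
        intro h
        have : i' = (⟨d, by omega⟩ : Fin (m+1)) := Fin.ext h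
        rw [this] at ha
        exact hrow (cI m d j) (cI_ne m d j) ha
      have hlt : (rI m d i : ℕ) < (i' : ℕ) := hii
      rw [rI_val] at hlt
      refine Or.inr ⟨⟨if (i':ℕ) < d then (i':ℕ) else (i':ℕ) - 1, by split <;> omega⟩, ?_, ?_⟩
      · rw [Fin.lt_def]
        simp only
        split at hlt <;> split <;> omega
      · have : rI m d ⟨if (i':ℕ) < d then (i':ℕ) else (i':ℕ) - 1, by split <;> omega⟩ = i' := by
          apply Fin.ext
          simp only [rI_val, Fin.val_mk]
          split <;> (try split) <;> omega
        rw [delT, this]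
        exact ha

lemma delT_isMCT (m d : ℕ) (hd : d ≤ m) (F : Fin (m+1) → Fin (m+1) → Option MSym)
    (hF : IsMCT (m+1) F)
    (hrow : ∀ j : Fin (m+1), (j:ℕ) ≠ m - d → F ⟨d, by omega⟩ j ≠ some MSym.a)
    (hcol : ∀ i : Fin (m+1), (i:ℕ) ≠ d → F i ⟨m - d, by omega⟩ ≠ some MSym.b) :
    IsMCT m (delT m d F) := by
  obtain ⟨h1, h2, h3⟩ := hF
  refine ⟨?_, ?_, ?_⟩
  · intro i j hij
    apply h1
    simp only [rI_val, cI_val]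
    split <;> split <;> omega
  · intro i
    rw [diagRow_delT m d hd]
    exact h2 _
  · intro i j hij
    have hi := i.isLt; have hj := j.isLt
    have hsum : (rI m d i : ℕ) + (cI m d j : ℕ) < m + 1 - 1 := by
      simp only [rI_val, cI_val]
      split <;> split <;> omega
    obtain ⟨hc1, hc2⟩ := h3 _ _ hsum
    rw [forcedEmpty_delT m d hd F hrow hcol, diagRow_delT m d hd, diagCol_delT m d hd]
    exact ⟨hc1, hc2⟩

lemma typeWord_getElem (n : ℕ) (F : Fin n → Fin n → Option MSym) (i : ℕ) (h : i < n) :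
    (typeWord n F)[i]'(by simpa [typeWord] using h) = symToLetter (diagRow n F ⟨i, h⟩) := by
  simp [typeWord]

lemma typeWord_delT_eq (m d : ℕ) (hd : d ≤ m) (F : Fin (m+1) → Fin (m+1) → Option MSym)
    (Y : List Letter) (hY : Y.length = m)
    (hpt : ∀ (i : ℕ) (h : i < m), symToLetter (diagRow (m+1) F (rI m d ⟨i, h⟩)) = Y[i]'(by omega)) :
    typeWord m (delT m d F) = Y := by
  apply List.ext_getElem (by simp [typeWord, hY])
  intro n h1 h2
  have hn : n < m := by simpa [typeWord] using h1
  rw [typeWord_getElem m _ n hn, diagRow_delT m d hd]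
  exact hpt n hn

end WW
namespace WW

lemma exists_rI (m d : ℕ) (hd : d ≤ m) (x : Fin (m+1)) (hx : (x:ℕ) ≠ d) :
    ∃ i : Fin m, rI m d i = x := by
  have := x.isLt
  refine ⟨⟨if (x:ℕ) < d then (x:ℕ) else (x:ℕ) - 1, by split <;> omega⟩, ?_⟩
  apply Fin.ext
  simp only [rI_val, Fin.val_mk]
  split <;> (try split) <;> omega

lemma exists_cI (m d : ℕ) (hd : d ≤ m) (x : Fin (m+1)) (hx : (x:ℕ) ≠ m - d) :
    ∃ j : Fin m, cI m d j = x := by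
  have := x.isLt
  refine ⟨⟨if (x:ℕ) < m - d then (x:ℕ) else (x:ℕ) - 1, by split <;> omega⟩, ?_⟩
  apply Fin.ext
  simp only [cI_val, Fin.val_mk]
  split <;> (try split) <;> omega

/-- insertion of a cross (row `d` and column `m-d`) with prescribed contents. -/
def insT (m d : ℕ) (rowv colv : ℕ → Option MSym) (G : Fin m → Fin m → Option MSym) :
    Fin (m+1) → Fin (m+1) → Option MSym :=
  fun i j =>
    if _hs : m + 1 ≤ (i:ℕ) + (j:ℕ) then none
    else if _hi : (i:ℕ) = d then rowv (j:ℕ)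
    else if _hj : (j:ℕ) = m - d then colv (i:ℕ)
    else G ⟨if (i:ℕ) < d then (i:ℕ) else (i:ℕ) - 1, by have := i.isLt; split <;> omega⟩
           ⟨if (j:ℕ) < m - d then (j:ℕ) else (j:ℕ) - 1, by have := j.isLt; split <;> omega⟩

lemma insT_ge (m d : ℕ) (rowv colv : ℕ → Option MSym) (G : Fin m → Fin m → Option MSym)
    (i j : Fin (m+1)) (h : m + 1 ≤ (i:ℕ) + (j:ℕ)) :
    insT m d rowv colv G i j = none := by
  simp [insT, h]

lemma insT_row (m d : ℕ) (rowv colv : ℕ → Option MSym) (G : Fin m → Fin m → Option MSym)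
    (i j : Fin (m+1)) (h : (i:ℕ) + (j:ℕ) < m + 1) (hi : (i:ℕ) = d) :
    insT m d rowv colv G i j = rowv (j:ℕ) := by
  simp only [insT]
  rw [dif_neg (by omega), dif_pos hi]

lemma insT_col (m d : ℕ) (rowv colv : ℕ → Option MSym) (G : Fin m → Fin m → Option MSym)
    (i j : Fin (m+1)) (h : (i:ℕ) + (j:ℕ) < m + 1) (hi : (i:ℕ) ≠ d) (hj : (j:ℕ) = m - d) :
    insT m d rowv colv G i j = colv (i:ℕ) := by
  simp only [insT]
  rw [dif_neg (by omega), dif_neg hi, dif_pos hj]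

lemma insT_off (m d : ℕ) (hd : d ≤ m) (rowv colv : ℕ → Option MSym)
    (G : Fin m → Fin m → Option MSym)
    (i j : Fin (m+1)) (h : (i:ℕ) + (j:ℕ) < m + 1) (hi : (i:ℕ) ≠ d) (hj : (j:ℕ) ≠ m - d) :
    insT m d rowv colv G i j =
      G ⟨if (i:ℕ) < d then (i:ℕ) else (i:ℕ) - 1, by have := i.isLt; split <;> omega⟩
        ⟨if (j:ℕ) < m - d then (j:ℕ) else (j:ℕ) - 1, by have := j.isLt; split <;> omega⟩ := by
  simp only [insT]
  rw [dif_neg (by omega), dif_neg hi, dif_neg hj]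

lemma rI_cases (m d : ℕ) (i : Fin m) :
    ((i:ℕ) < d ∧ (rI m d i : ℕ) = (i:ℕ)) ∨ (d ≤ (i:ℕ) ∧ (rI m d i : ℕ) = (i:ℕ) + 1) := by
  rw [rI_val]; split <;> [left; right] <;> omega

lemma cI_cases (m d : ℕ) (j : Fin m) :
    ((j:ℕ) < m - d ∧ (cI m d j : ℕ) = (j:ℕ)) ∨ (m - d ≤ (j:ℕ) ∧ (cI m d j : ℕ) = (j:ℕ) + 1) := by
  rw [cI_val]; split <;> [left; right] <;> omega

lemma delT_insT (m d : ℕ) (hd : d ≤ m) (rowv colv : ℕ → Option MSym)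
    (G : Fin m → Fin m → Option MSym)
    (hG1 : ∀ i j : Fin m, m ≤ (i:ℕ) + (j:ℕ) → G i j = none) :
    delT m d (insT m d rowv colv G) = G := by
  funext i j
  have hi := i.isLt; have hj := j.isLt
  have hr := rI_cases m d i; have hc := cI_cases m d j
  show insT m d rowv colv G (rI m d i) (cI m d j) = G i j
  rcases Nat.lt_or_ge ((rI m d i : ℕ) + (cI m d j : ℕ)) (m+1) with hs | hs
  · rw [insT_off m d hd rowv colv G _ _ hs (rI_ne m d i) (cI_ne m d j)]
    congr 1 <;> apply Fin.ext <;> simp only [Fin.val_mk] <;> split <;> omega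
  · rw [insT_ge m d rowv colv G _ _ hs]
    exact (hG1 i j (by omega)).symm

end WW
namespace WW

lemma diagRow_insT_d (m d : ℕ) (hd : d ≤ m) (rowv colv : ℕ → Option MSym)
    (G : Fin m → Fin m → Option MSym) (i : Fin (m+1)) (hi : (i:ℕ) = d) :
    diagRow (m+1) (insT m d rowv colv G) i = rowv (m - d) := by
  have h := i.isLt
  show insT m d rowv colv G i ⟨m+1-1-(i:ℕ), by omega⟩ = rowv (m - d)
  rw [insT_row m d rowv colv G i _ (by simp only [Fin.val_mk]; omega) hi]
  congr 1
  simp only [Fin.val_mk]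
  omega

lemma insT_isMCT (m d : ℕ) (hd : d ≤ m) (rowv colv : ℕ → Option MSym)
    (G : Fin m → Fin m → Option MSym) (hG : IsMCT m G)
    (hdiag : rowv (m - d) ≠ none)
    (hrowv : ∀ j : ℕ, j ≠ m - d → rowv j ≠ some MSym.a)
    (hcolv : ∀ i : ℕ, i ≠ d → colv i ≠ some MSym.b)
    (hcross : ∀ i j : Fin (m+1), (i:ℕ) + (j:ℕ) < m + 1 - 1 → ((i:ℕ) = d ∨ (j:ℕ) = m - d) →
      (ForcedEmpty (m+1) (insT m d rowv colv G) i j → insT m d rowv colv G i j = none) ∧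
      (¬ ForcedEmpty (m+1) (insT m d rowv colv G) i j →
        match diagRow (m+1) (insT m d rowv colv G) i, diagCol (m+1) (insT m d rowv colv G) j with
        | some MSym.a, some MSym.b =>
            insT m d rowv colv G i j = some MSym.a ∨ insT m d rowv colv G i j = some MSym.b
        | some MSym.a, some MSym.x => insT m d rowv colv G i j = some MSym.b
        | some MSym.x, some MSym.b => insT m d rowv colv G i j = some MSym.a
        | _, _ => insT m d rowv colv G i j = none)) :
    IsMCT (m+1) (insT m d rowv colv G) := by
  have hdel : delT m d (insT m d rowv colv G) = G := delT_insT m d hd rowv colv G hG.1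
  have hrowF : ∀ j : Fin (m+1), (j:ℕ) ≠ m - d →
      insT m d rowv colv G ⟨d, by omega⟩ j ≠ some MSym.a := by
    intro j hj
    rcases Nat.lt_or_ge ((d:ℕ) + (j:ℕ)) (m+1) with h | h
    · rw [insT_row m d rowv colv G _ _ (by simpa using h) rfl]
      exact hrowv j hj
    · rw [insT_ge m d rowv colv G _ _ (by simpa using h)]
      simp
  have hcolF : ∀ i : Fin (m+1), (i:ℕ) ≠ d →
      insT m d rowv colv G i ⟨m - d, by omega⟩ ≠ some MSym.b := by
    intro i hi
    rcases Nat.lt_or_ge ((i:ℕ) + (m - d)) (m+1) with h | h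
    · rw [insT_col m d rowv colv G _ _ (by simpa using h) hi rfl]
      exact hcolv i hi
    · rw [insT_ge m d rowv colv G _ _ (by simpa using h)]
      simp
  refine ⟨fun i j h => insT_ge m d rowv colv G i j h, ?_, ?_⟩
  · intro i
    by_cases hi : (i:ℕ) = d
    · rw [diagRow_insT_d m d hd rowv colv G i hi]
      exact hdiag
    · obtain ⟨i₀, rfl⟩ := exists_rI m d hd i hi
      have h := hG.2.1 i₀
      rw [← hdel, diagRow_delT m d hd] at h
      exact h
  · intro i j hsum
    by_cases hc : (i:ℕ) = d ∨ (j:ℕ) = m - d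
    · exact hcross i j hsum hc
    · push_neg at hc
      obtain ⟨i₀, rfl⟩ := exists_rI m d hd i hc.1
      obtain ⟨j₀, rfl⟩ := exists_cI m d hd j hc.2
      have hs0 : (i₀:ℕ) + (j₀:ℕ) < m - 1 := by
        have hr := rI_cases m d i₀; have hc2 := cI_cases m d j₀
        have := i₀.isLt; have := j₀.isLt
        omega
      have hg := hG.2.2 i₀ j₀ hs0
      rw [← hdel] at hg
      rw [forcedEmpty_delT m d hd _ hrowF hcolF, diagRow_delT m d hd, diagCol_delT m d hd] at hg
      exact hg

lemma typeWord_insT_eq (m d : ℕ) (hd : d ≤ m) (rowv colv : ℕ → Option MSym)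
    (G : Fin m → Fin m → Option MSym)
    (hG1 : ∀ i j : Fin m, m ≤ (i:ℕ) + (j:ℕ) → G i j = none)
    (Z : List Letter) (hZ : Z.length = m + 1)
    (hdv : symToLetter (rowv (m - d)) = Z[d]'(by omega))
    (hpt : ∀ i : Fin m, symToLetter (diagRow m G i) =
      Z[(rI m d i : ℕ)]'(by have := (rI m d i).isLt; omega)) :
    typeWord (m+1) (insT m d rowv colv G) = Z := by
  have hdel : delT m d (insT m d rowv colv G) = G := delT_insT m d hd rowv colv G hG1
  apply List.ext_getElem (by simp [typeWord, hZ])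
  intro n h1 h2
  have hn : n < m + 1 := by simpa [typeWord] using h1
  rw [typeWord_getElem (m+1) _ n hn]
  by_cases hni : n = d
  · rw [diagRow_insT_d m d hd rowv colv G _ (by simpa using hni)]
    subst hni
    exact hdv
  · obtain ⟨i₀, hi₀⟩ := exists_rI m d hd ⟨n, hn⟩ (by simpa using hni)
    rw [← hi₀, ← diagRow_delT m d hd, hdel, hpt i₀]
    have hv : (rI m d i₀ : ℕ) = n := by rw [hi₀]
    simp only [hv]

end WW
namespace WW

lemma rI_inj (m d : ℕ) : Function.Injective (rI m d) := by
  intro i i' h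
  have h2 := congrArg Fin.val h
  rw [rI_val, rI_val] at h2
  apply Fin.ext
  split at h2 <;> split at h2 <;> omega

lemma cI_inj (m d : ℕ) : Function.Injective (cI m d) := by
  intro j j' h
  have h2 := congrArg Fin.val h
  rw [cI_val, cI_val] at h2
  apply Fin.ext
  split at h2 <;> split at h2 <;> omega

lemma countSym_delT (m d : ℕ) (hd : d ≤ m) (F : Fin (m+1) → Fin (m+1) → Option MSym)
    (s : MSym) (p : Fin (m+1) × Fin (m+1))
    (hps : F p.1 p.2 = some s)
    (hp : (p.1:ℕ) = d ∨ (p.2:ℕ) = m - d)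
    (hcross : ∀ i j : Fin (m+1), ((i:ℕ) = d ∨ (j:ℕ) = m - d) → F i j = some s → (i, j) = p) :
    countSym (m+1) F s = countSym m (delT m d F) s + 1 := by
  classical
  have hinj : Function.Injective (fun q : Fin m × Fin m => (rI m d q.1, cI m d q.2)) := by
    intro q q' h
    rw [Prod.ext_iff] at h ⊢
    exact ⟨rI_inj m d h.1, cI_inj m d h.2⟩
  have key : (Finset.univ.filter fun p' : Fin (m+1) × Fin (m+1) => F p'.1 p'.2 = some s) =
      insert p ((Finset.univ.filter fun q : Fin m × Fin m => delT m d F q.1 q.2 = some s).image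
        (fun q => (rI m d q.1, cI m d q.2))) := by
    ext q
    simp only [Finset.mem_filter, Finset.mem_univ, true_and, Finset.mem_insert, Finset.mem_image]
    constructor
    · intro hq
      by_cases hc : (q.1:ℕ) = d ∨ (q.2:ℕ) = m - d
      · left
        have := hcross q.1 q.2 hc hq
        rwa [Prod.mk.eta] at this
      · right
        push_neg at hc
        obtain ⟨i₀, hi₀⟩ := exists_rI m d hd q.1 hc.1
        obtain ⟨j₀, hj₀⟩ := exists_cI m d hd q.2 hc.2
        refine ⟨(i₀, j₀), ?_, ?_⟩
        · show F (rI m d i₀) (cI m d j₀) = some s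
          rw [hi₀, hj₀]; exact hq
        · rw [hi₀, hj₀]
    · rintro (rfl | ⟨q₀, hq₀, rfl⟩)
      · exact hps
      · exact hq₀
  rw [countSym, key, Finset.card_insert_of_notMem, Finset.card_image_of_injective _ hinj]
  · rfl
  · intro hmem
    rw [Finset.mem_image] at hmem
    obtain ⟨q₀, _, hq⟩ := hmem
    subst hq
    rcases hp with hp | hp
    · exact rI_ne m d q₀.1 hp
    · exact cI_ne m d q₀.2 hp

end WW
namespace WW

lemma wt_delT (m d : ℕ) (hd : d ≤ m) (α β : ℝ) (F : Fin (m+1) → Fin (m+1) → Option MSym)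
    (pa pb : Fin (m+1) × Fin (m+1))
    (hpa : F pa.1 pa.2 = some MSym.a) (hpa' : (pa.1:ℕ) = d ∨ (pa.2:ℕ) = m - d)
    (hca : ∀ i j : Fin (m+1), ((i:ℕ) = d ∨ (j:ℕ) = m - d) → F i j = some MSym.a → (i, j) = pa)
    (hpb : F pb.1 pb.2 = some MSym.b) (hpb' : (pb.1:ℕ) = d ∨ (pb.2:ℕ) = m - d)
    (hcb : ∀ i j : Fin (m+1), ((i:ℕ) = d ∨ (j:ℕ) = m - d) → F i j = some MSym.b → (i, j) = pb) :
    wt (m+1) α β F = α * β * wt m α β (delT m d F) := by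
  rw [wt, wt, countSym_delT m d hd F MSym.a pa hpa hpa' hca,
    countSym_delT m d hd F MSym.b pb hpb hpb' hcb]
  ring

lemma symToLetter_D {o : Option MSym} (h : symToLetter o = Letter.D) : o = some MSym.a := by
  rcases o with _ | (_|_|_) <;> simp_all [symToLetter]

lemma symToLetter_E {o : Option MSym} (h : symToLetter o = Letter.E) : o = some MSym.b := by
  rcases o with _ | (_|_|_) <;> simp_all [symToLetter]

lemma getElem_triple (u w : List Letter) (c1 c2 : Letter) (i : ℕ)
    (h : i < u.length + 2 + w.length) :
    (u ++ [c1, c2] ++ w)[i]'(by simp; omega) =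
      if h1 : i < u.length then u[i]
      else if _h2 : i = u.length then c1
      else if _h3 : i = u.length + 1 then c2
      else w[i - u.length - 2]'(by omega) := by
  rcases Nat.lt_or_ge i u.length with h1 | h1
  · rw [dif_pos h1, List.getElem_append_left (by simp; omega),
      List.getElem_append_left h1]
  · rw [dif_neg (by omega)]
    rcases Nat.eq_or_lt_of_le h1 with h2 | h2
    · rw [dif_pos h2.symm, List.getElem_append_left (bs := w) (by simp; omega),
        List.getElem_append_right (by omega)]
      have : i - u.length = 0 := by omega
      simp [this]
    · rcases Nat.eq_or_lt_of_le h2 with h3 | h3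
      · rw [dif_neg (by omega), dif_pos (by omega),
          List.getElem_append_left (bs := w) (by simp; omega),
          List.getElem_append_right (by omega)]
        have : i - u.length = 1 := by omega
        simp [this]
      · rw [dif_neg (by omega), dif_neg (by omega),
          List.getElem_append_right (by simp; omega)]
        congr 1
        simp only [List.length_append, List.length_cons, List.length_nil]
        omega

lemma getElem_single (u w : List Letter) (c : Letter) (i : ℕ)
    (h : i < u.length + 1 + w.length) :
    (u ++ [c] ++ w)[i]'(by simp; omega) =
      if h1 : i < u.length then u[i]
      else if _h2 : i = u.length then c
      else w[i - u.length - 1]'(by omega) := by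
  rcases Nat.lt_or_ge i u.length with h1 | h1
  · rw [dif_pos h1, List.getElem_append_left (by simp; omega),
      List.getElem_append_left h1]
  · rw [dif_neg (by omega)]
    rcases Nat.eq_or_lt_of_le h1 with h2 | h2
    · rw [dif_pos h2.symm, List.getElem_append_left (bs := w) (by simp; omega),
        List.getElem_append_right (by omega)]
      have : i - u.length = 0 := by omega
      simp [this]
    · rw [dif_neg (by omega), List.getElem_append_right (by simp; omega)]
      congr 1
      simp only [List.length_append, List.length_cons, List.length_nil]
      omega

end WW
namespace WW

lemma diagRow_eq (n : ℕ) (F : Fin n → Fin n → Option MSym) (i j : Fin n)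
    (hj : (j:ℕ) = n - 1 - (i:ℕ)) : diagRow n F i = F i j := by
  have := i.isLt
  rw [diagRow]
  congr 1
  exact (Fin.ext hj).symm

lemma diagCol_eq (n : ℕ) (F : Fin n → Fin n → Option MSym) (i j : Fin n)
    (hi : (i:ℕ) = n - 1 - (j:ℕ)) : diagCol n F j = F i j := by
  have := j.isLt
  rw [diagCol]
  congr 1
  exact (Fin.ext hi).symm

lemma diag_of_typeWord (n : ℕ) (F : Fin n → Fin n → Option MSym) (X : List Letter)
    (hT : typeWord n F = X) (i : ℕ) (h : i < n) :
    symToLetter (diagRow n F ⟨i, h⟩) = X[i]'(by rw [← hT]; simpa [typeWord] using h) := by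
  have h2 := typeWord_getElem n F i h
  rw [List.getElem_of_eq hT] at h2
  exact h2.symm

section CaseA

variable (k l m : ℕ) (hm : m = k + 1 + l)
variable (F : Fin (m+1) → Fin (m+1) → Option MSym) (hF : IsMCT (m+1) F)
variable (hda : F ⟨k, by omega⟩ ⟨l+1, by omega⟩ = some MSym.a)
variable (hdb : F ⟨k+1, by omega⟩ ⟨l, by omega⟩ = some MSym.b)

include hm

lemma corner_ab (hF : IsMCT (m+1) F)
    (hda : F ⟨k, by omega⟩ ⟨l+1, by omega⟩ = some MSym.a)
    (hdb : F ⟨k+1, by omega⟩ ⟨l, by omega⟩ = some MSym.b) :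
    F ⟨k, by omega⟩ ⟨l, by omega⟩ = some MSym.a ∨ F ⟨k, by omega⟩ ⟨l, by omega⟩ = some MSym.b := by
  have hnf : ¬ ForcedEmpty (m+1) F ⟨k, by omega⟩ ⟨l, by omega⟩ := by
    rintro (⟨j', hj', hb⟩ | ⟨i', hi', ha⟩)
    · have h1 := j'.isLt
      have h2 : l < (j':ℕ) := hj'
      by_cases h3 : (j':ℕ) = l + 1
      · rw [show j' = ⟨l+1, by omega⟩ from Fin.ext h3] at hb
        rw [hda] at hb
        exact absurd hb (by simp)
      · rw [hF.1 _ _ (by simp only [Fin.val_mk]; omega)] at hb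
        exact absurd hb (by simp)
    · have h1 := i'.isLt
      have h2 : k < (i':ℕ) := hi'
      by_cases h3 : (i':ℕ) = k + 1
      · rw [show i' = ⟨k+1, by omega⟩ from Fin.ext h3] at ha
        rw [hdb] at ha
        exact absurd ha (by simp)
      · rw [hF.1 _ _ (by simp only [Fin.val_mk]; omega)] at ha
        exact absurd ha (by simp)
  have h3 := (hF.2.2 ⟨k, by omega⟩ ⟨l, by omega⟩ (by simp only [Fin.val_mk]; omega)).2 hnf
  have e1 : diagRow (m+1) F ⟨k, by omega⟩ = some MSym.a := by
    rw [diagRow_eq (m+1) F _ ⟨l+1, by omega⟩ (by simp only [Fin.val_mk]; omega)]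
    exact hda
  have e2 : diagCol (m+1) F ⟨l, by omega⟩ = some MSym.b := by
    rw [diagCol_eq (m+1) F ⟨k+1, by omega⟩ _ (by simp only [Fin.val_mk]; omega)]
    exact hdb
  rw [e1, e2] at h3
  exact h3

lemma rowCharA (hF : IsMCT (m+1) F)
    (hdb : F ⟨k+1, by omega⟩ ⟨l, by omega⟩ = some MSym.b) :
    ∀ j : Fin (m+1), (j:ℕ) ≠ l → F ⟨k+1, by omega⟩ j = none := by
  intro j hj
  have hjl := j.isLt
  rcases Nat.lt_or_ge (j:ℕ) l with h | h
  · exact (hF.2.2 ⟨k+1, by omega⟩ j (by simp only [Fin.val_mk]; omega)).1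
      (Or.inl ⟨⟨l, by omega⟩, by rw [Fin.lt_def]; simp only [Fin.val_mk]; omega, hdb⟩)
  · exact hF.1 _ _ (by simp only [Fin.val_mk]; omega)

lemma colCharA (hF : IsMCT (m+1) F)
    (hc : F ⟨k, by omega⟩ ⟨l, by omega⟩ = some MSym.a) :
    ∀ i : Fin (m+1), (i:ℕ) ≠ k → (i:ℕ) ≠ k + 1 → F i ⟨l, by omega⟩ = none := by
  intro i hik hik1
  have hil := i.isLt
  rcases Nat.lt_or_ge (i:ℕ) k with h | h
  · exact (hF.2.2 i ⟨l, by omega⟩ (by simp only [Fin.val_mk]; omega)).1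
      (Or.inr ⟨⟨k, by omega⟩, by rw [Fin.lt_def]; simp only [Fin.val_mk]; omega, hc⟩)
  · exact hF.1 _ _ (by simp only [Fin.val_mk]; omega)

end CaseA

end WW
namespace WW

lemma getElem_idx_congr {α : Type*} (L : List α) {x y : ℕ} (h : x = y) (hx : x < L.length) :
    L[x] = L[y]'(h ▸ hx) := by subst h; rfl


lemma listrelA (X' X'' : List Letter) (c1 c2 : Letter) (i : ℕ)
    (h : i < X'.length + 1 + X''.length) :
    (X' ++ [c1, c2] ++ X'')[if i < X'.length + 1 then i else i + 1]'(by
        simp only [List.length_append, List.length_cons, List.length_nil]; split <;> omega) =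
      (X' ++ [c1] ++ X'')[i]'(by
        simp only [List.length_append, List.length_cons, List.length_nil]; omega) := by
  rcases Nat.lt_or_ge i (X'.length + 1) with h0 | h0
  · simp only [if_pos h0]
    rw [getElem_triple X' X'' c1 c2 i (by omega), getElem_single X' X'' c1 i (by omega)]
    by_cases h1 : i < X'.length
    · rw [dif_pos h1, dif_pos h1]
    · rw [dif_neg h1, dif_neg h1, dif_pos (show i = X'.length by omega),
        dif_pos (show i = X'.length by omega)]
  · simp only [if_neg (show ¬ i < X'.length + 1 by omega)]
    rw [getElem_triple X' X'' c1 c2 (i+1) (by omega), getElem_single X' X'' c1 i (by omega)]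
    rw [dif_neg (show ¬ i + 1 < X'.length by omega), dif_neg (show ¬ i + 1 = X'.length by omega),
      dif_neg (show ¬ i + 1 = X'.length + 1 by omega), dif_neg (show ¬ i < X'.length by omega),
      dif_neg (show ¬ i = X'.length by omega)]
    apply getElem_idx_congr
    omega

lemma listrelB (X' X'' : List Letter) (c1 c2 : Letter) (i : ℕ)
    (h : i < X'.length + 1 + X''.length) :
    (X' ++ [c1, c2] ++ X'')[if i < X'.length then i else i + 1]'(by
        simp only [List.length_append, List.length_cons, List.length_nil]; split <;> omega) =
      (X' ++ [c2] ++ X'')[i]'(by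
        simp only [List.length_append, List.length_cons, List.length_nil]; omega) := by
  rcases Nat.lt_or_ge i X'.length with h0 | h0
  · simp only [if_pos h0]
    rw [getElem_triple X' X'' c1 c2 i (by omega), getElem_single X' X'' c2 i (by omega)]
    rw [dif_pos h0, dif_pos h0]
  · simp only [if_neg (show ¬ i < X'.length by omega)]
    rw [getElem_triple X' X'' c1 c2 (i+1) (by omega), getElem_single X' X'' c2 i (by omega)]
    by_cases h1 : i = X'.length
    · rw [dif_neg (show ¬ i + 1 < X'.length by omega), dif_neg (show ¬ i + 1 = X'.length by omega),
        dif_pos (show i + 1 = X'.length + 1 by omega), dif_neg (show ¬ i < X'.length by omega),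
        dif_pos h1]
    · rw [dif_neg (show ¬ i + 1 < X'.length by omega), dif_neg (show ¬ i + 1 = X'.length by omega),
        dif_neg (show ¬ i + 1 = X'.length + 1 by omega), dif_neg (show ¬ i < X'.length by omega),
        dif_neg h1]
      apply getElem_idx_congr
      omega

lemma word_k_D (X' X'' : List Letter) (c1 c2 : Letter) (i : ℕ) (hi : i = X'.length)
    (h : i < (X' ++ [c1, c2] ++ X'').length) :
    (X' ++ [c1, c2] ++ X'')[i] = c1 := by
  subst hi
  rw [getElem_triple X' X'' c1 c2 _ (by simp at h; omega)]
  simp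

lemma word_k1_E (X' X'' : List Letter) (c1 c2 : Letter) (i : ℕ) (hi : i = X'.length + 1)
    (h : i < (X' ++ [c1, c2] ++ X'').length) :
    (X' ++ [c1, c2] ++ X'')[i] = c2 := by
  subst hi
  rw [getElem_triple X' X'' c1 c2 _ (by simp at h; omega)]
  simp

lemma word_single_k (X' X'' : List Letter) (c : Letter) (i : ℕ) (hi : i = X'.length)
    (h : i < (X' ++ [c] ++ X'').length) :
    (X' ++ [c] ++ X'')[i] = c := by
  subst hi
  rw [getElem_single X' X'' c _ (by simp at h; omega)]
  simp

lemma diags_DE (k l m : ℕ) (hm : m = k + 1 + l) (X' X'' : List Letter)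
    (hk : X'.length = k) (hl : X''.length = l)
    (F : Fin (m+1) → Fin (m+1) → Option MSym)
    (hT : typeWord (m+1) F = X' ++ [Letter.D, Letter.E] ++ X'') :
    F ⟨k, by omega⟩ ⟨l+1, by omega⟩ = some MSym.a ∧
      F ⟨k+1, by omega⟩ ⟨l, by omega⟩ = some MSym.b := by
  have h1 := diag_of_typeWord (m+1) F _ hT k (by omega)
  have h2 := diag_of_typeWord (m+1) F _ hT (k+1) (by omega)
  rw [word_k_D X' X'' _ _ k hk.symm] at h1
  rw [word_k1_E X' X'' _ _ (k+1) (by omega)] at h2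
  have e1 := symToLetter_D h1
  have e2 := symToLetter_E h2
  constructor
  · rw [diagRow_eq (m+1) F _ ⟨l+1, by omega⟩ (by simp only [Fin.val_mk]; omega)] at e1
    convert e1 using 3 <;> omega
  · rw [diagRow_eq (m+1) F _ ⟨l, by omega⟩ (by simp only [Fin.val_mk]; omega)] at e2
    convert e2 using 3 <;> omega

lemma diag_mid (k l m : ℕ) (hm : m = k + 1 + l) (X' X'' : List Letter)
    (hk : X'.length = k) (hl : X''.length = l) (c : Letter)
    (G : Fin m → Fin m → Option MSym)
    (hGt : typeWord m G = X' ++ [c] ++ X'') :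
    symToLetter (G ⟨k, by omega⟩ ⟨l, by omega⟩) = c := by
  have h1 := diag_of_typeWord m G _ hGt k (by omega)
  rw [word_single_k X' X'' c k hk.symm] at h1
  rw [diagRow_eq m G _ ⟨l, by omega⟩ (by simp only [Fin.val_mk]; omega)] at h1
  convert h1 using 4 <;> omega

section CaseB

variable (k l m : ℕ)

lemma rowCharB (hm : m = k + 1 + l) (F : Fin (m+1) → Fin (m+1) → Option MSym)
    (hF : IsMCT (m+1) F)
    (hc : F ⟨k, by omega⟩ ⟨l, by omega⟩ = some MSym.b) :
    ∀ j : Fin (m+1), (j:ℕ) ≠ l → (j:ℕ) ≠ l + 1 → F ⟨k, by omega⟩ j = none := by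
  intro j hj hj1
  have hjl := j.isLt
  rcases Nat.lt_or_ge (j:ℕ) l with h | h
  · exact (hF.2.2 ⟨k, by omega⟩ j (by simp only [Fin.val_mk]; omega)).1
      (Or.inl ⟨⟨l, by omega⟩, by rw [Fin.lt_def]; simp only [Fin.val_mk]; omega, hc⟩)
  · exact hF.1 _ _ (by simp only [Fin.val_mk]; omega)

lemma colCharB (hm : m = k + 1 + l) (F : Fin (m+1) → Fin (m+1) → Option MSym)
    (hF : IsMCT (m+1) F)
    (hda : F ⟨k, by omega⟩ ⟨l+1, by omega⟩ = some MSym.a) :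
    ∀ i : Fin (m+1), (i:ℕ) ≠ k → F i ⟨l+1, by omega⟩ = none := by
  intro i hik
  have hil := i.isLt
  rcases Nat.lt_or_ge (i:ℕ) k with h | h
  · exact (hF.2.2 i ⟨l+1, by omega⟩ (by simp only [Fin.val_mk]; omega)).1
      (Or.inr ⟨⟨k, by omega⟩, by rw [Fin.lt_def]; simp only [Fin.val_mk]; omega, hda⟩)
  · exact hF.1 _ _ (by simp only [Fin.val_mk]; omega)

end CaseB

end WW
namespace WW

def rowA (l : ℕ) : ℕ → Option MSym := fun j => if j = l then some MSym.b else none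
def colA (k : ℕ) : ℕ → Option MSym := fun i => if i = k then some MSym.a else none
def rowB (l : ℕ) : ℕ → Option MSym := fun j =>
  if j = l + 1 then some MSym.a else if j = l then some MSym.b else none
def colB : ℕ → Option MSym := fun _ => none

section Rounds

variable (k l m : ℕ)

lemma roundA (hm : m = k + 1 + l) (F : Fin (m+1) → Fin (m+1) → Option MSym)
    (hF : IsMCT (m+1) F)
    (hdb : F ⟨k+1, by omega⟩ ⟨l, by omega⟩ = some MSym.b)
    (hcA : F ⟨k, by omega⟩ ⟨l, by omega⟩ = some MSym.a) :
    insT m (k+1) (rowA l) (colA k) (delT m (k+1) F) = F := by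
  funext i j
  have hi := i.isLt; have hj := j.isLt
  rcases Nat.lt_or_ge ((i:ℕ) + (j:ℕ)) (m+1) with hs | hs
  · by_cases hik : (i:ℕ) = k + 1
    · rw [insT_row m (k+1) _ _ _ i j hs hik]
      rw [show i = ⟨k+1, by omega⟩ from Fin.ext hik]
      by_cases hjl : (j:ℕ) = l
      · rw [rowA, if_pos hjl, show j = ⟨l, by omega⟩ from Fin.ext hjl]
        exact hdb.symm
      · rw [rowA]
        simp only [if_neg hjl]
        exact (rowCharA k l m hm F hF hdb j hjl).symm
    · by_cases hjl : (j:ℕ) = m - (k+1)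
      · rw [insT_col m (k+1) _ _ _ i j hs hik hjl]
        rw [show j = ⟨l, by omega⟩ from Fin.ext (by simp only [Fin.val_mk]; omega)]
        by_cases hik2 : (i:ℕ) = k
        · rw [colA, if_pos hik2, show i = ⟨k, by omega⟩ from Fin.ext hik2]
          exact hcA.symm
        · rw [colA]
          simp only [if_neg hik2]
          exact (colCharA k l m hm F hF hcA i hik2 hik).symm
      · rw [insT_off m (k+1) (by omega) _ _ _ i j hs hik hjl]
        show F _ _ = F i j
        congr 1 <;> apply Fin.ext <;>
          simp only [rI_val, cI_val, Fin.val_mk] <;> split <;> (try split) <;> omega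
  · rw [insT_ge m (k+1) _ _ _ i j hs]
    exact (hF.1 i j hs).symm

lemma roundB (hm : m = k + 1 + l) (F : Fin (m+1) → Fin (m+1) → Option MSym)
    (hF : IsMCT (m+1) F)
    (hda : F ⟨k, by omega⟩ ⟨l+1, by omega⟩ = some MSym.a)
    (hcB : F ⟨k, by omega⟩ ⟨l, by omega⟩ = some MSym.b) :
    insT m k (rowB l) colB (delT m k F) = F := by
  funext i j
  have hi := i.isLt; have hj := j.isLt
  rcases Nat.lt_or_ge ((i:ℕ) + (j:ℕ)) (m+1) with hs | hs
  · by_cases hik : (i:ℕ) = k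
    · rw [insT_row m k _ _ _ i j hs hik]
      rw [show i = ⟨k, by omega⟩ from Fin.ext hik]
      by_cases hjl1 : (j:ℕ) = l + 1
      · rw [rowB, if_pos hjl1, show j = ⟨l+1, by omega⟩ from Fin.ext hjl1]
        exact hda.symm
      · by_cases hjl : (j:ℕ) = l
        · rw [rowB]
          simp only [if_neg hjl1, if_pos hjl]
          rw [show j = ⟨l, by omega⟩ from Fin.ext hjl]
          exact hcB.symm
        · rw [rowB]
          simp only [if_neg hjl1, if_neg hjl]
          exact (rowCharB k l m hm F hF hcB j hjl hjl1).symm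
    · by_cases hjl : (j:ℕ) = m - k
      · rw [insT_col m k _ _ _ i j hs hik hjl]
        rw [show j = ⟨l+1, by omega⟩ from Fin.ext (by simp only [Fin.val_mk]; omega)]
        exact (colCharB k l m hm F hF hda i hik).symm
      · rw [insT_off m k (by omega) _ _ _ i j hs hik hjl]
        show F _ _ = F i j
        congr 1 <;> apply Fin.ext <;>
          simp only [rI_val, cI_val, Fin.val_mk] <;> split <;> (try split) <;> omega
  · rw [insT_ge m k _ _ _ i j hs]
    exact (hF.1 i j hs).symm

lemma uniqA_a (hm : m = k + 1 + l) (F : Fin (m+1) → Fin (m+1) → Option MSym)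
    (hF : IsMCT (m+1) F)
    (hdb : F ⟨k+1, by omega⟩ ⟨l, by omega⟩ = some MSym.b)
    (hcA : F ⟨k, by omega⟩ ⟨l, by omega⟩ = some MSym.a) :
    ∀ i j : Fin (m+1), ((i:ℕ) = k+1 ∨ (j:ℕ) = m - (k+1)) → F i j = some MSym.a →
      (i, j) = ((⟨k, by omega⟩ : Fin (m+1)), (⟨l, by omega⟩ : Fin (m+1))) := by
  intro i j hc hv
  have hjl : (j:ℕ) = l := by
    rcases hc with hx | hx
    · exfalso
      rw [show i = ⟨k+1, by omega⟩ from Fin.ext hx] at hv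
      by_cases hjl : (j:ℕ) = l
      · rw [show j = ⟨l, by omega⟩ from Fin.ext hjl, hdb] at hv
        simp at hv
      · rw [rowCharA k l m hm F hF hdb j hjl] at hv
        simp at hv
    · omega
  rw [show j = ⟨l, by omega⟩ from Fin.ext hjl] at hv ⊢
  by_cases hik : (i:ℕ) = k
  · rw [show i = ⟨k, by omega⟩ from Fin.ext hik]
  · exfalso
    by_cases hik1 : (i:ℕ) = k + 1
    · rw [show i = ⟨k+1, by omega⟩ from Fin.ext hik1, hdb] at hv
      simp at hv
    · rw [colCharA k l m hm F hF hcA i hik hik1] at hv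
      simp at hv

lemma uniqA_b (hm : m = k + 1 + l) (F : Fin (m+1) → Fin (m+1) → Option MSym)
    (hF : IsMCT (m+1) F)
    (hdb : F ⟨k+1, by omega⟩ ⟨l, by omega⟩ = some MSym.b)
    (hcA : F ⟨k, by omega⟩ ⟨l, by omega⟩ = some MSym.a) :
    ∀ i j : Fin (m+1), ((i:ℕ) = k+1 ∨ (j:ℕ) = m - (k+1)) → F i j = some MSym.b →
      (i, j) = ((⟨k+1, by omega⟩ : Fin (m+1)), (⟨l, by omega⟩ : Fin (m+1))) := by
  intro i j hc hv
  have hjl : (j:ℕ) = l := by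
    rcases hc with hx | hx
    · by_cases hjl : (j:ℕ) = l
      · exact hjl
      · exfalso
        rw [show i = ⟨k+1, by omega⟩ from Fin.ext hx, rowCharA k l m hm F hF hdb j hjl] at hv
        simp at hv
    · omega
  ext
  swap
  · simp only [Fin.val_mk]; exact hjl
  simp only [Fin.val_mk]
  rw [show j = ⟨l, by omega⟩ from Fin.ext hjl] at hv
  by_cases hik : (i:ℕ) = k + 1
  · exact hik
  · exfalso
    by_cases hik2 : (i:ℕ) = k
    · rw [show i = ⟨k, by omega⟩ from Fin.ext hik2, hcA] at hv
      simp at hv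
    · rw [colCharA k l m hm F hF hcA i hik2 hik] at hv
      simp at hv

lemma uniqB_a (hm : m = k + 1 + l) (F : Fin (m+1) → Fin (m+1) → Option MSym)
    (hF : IsMCT (m+1) F)
    (hda : F ⟨k, by omega⟩ ⟨l+1, by omega⟩ = some MSym.a)
    (hcB : F ⟨k, by omega⟩ ⟨l, by omega⟩ = some MSym.b) :
    ∀ i j : Fin (m+1), ((i:ℕ) = k ∨ (j:ℕ) = m - k) → F i j = some MSym.a →
      (i, j) = ((⟨k, by omega⟩ : Fin (m+1)), (⟨l+1, by omega⟩ : Fin (m+1))) := by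
  intro i j hc hv
  have hik : (i:ℕ) = k := by
    rcases hc with hx | hx
    · exact hx
    · by_cases hik : (i:ℕ) = k
      · exact hik
      · exfalso
        rw [show j = ⟨l+1, by omega⟩ from Fin.ext (by simp only [Fin.val_mk]; omega),
          colCharB k l m hm F hF hda i hik] at hv
        simp at hv
  rw [show i = ⟨k, by omega⟩ from Fin.ext hik] at hv ⊢
  by_cases hjl1 : (j:ℕ) = l + 1
  · rw [show j = ⟨l+1, by omega⟩ from Fin.ext hjl1]
  · exfalso
    by_cases hjl : (j:ℕ) = l
    · rw [show j = ⟨l, by omega⟩ from Fin.ext hjl, hcB] at hv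
      simp at hv
    · rw [rowCharB k l m hm F hF hcB j hjl hjl1] at hv
      simp at hv

lemma uniqB_b (hm : m = k + 1 + l) (F : Fin (m+1) → Fin (m+1) → Option MSym)
    (hF : IsMCT (m+1) F)
    (hda : F ⟨k, by omega⟩ ⟨l+1, by omega⟩ = some MSym.a)
    (hcB : F ⟨k, by omega⟩ ⟨l, by omega⟩ = some MSym.b) :
    ∀ i j : Fin (m+1), ((i:ℕ) = k ∨ (j:ℕ) = m - k) → F i j = some MSym.b →
      (i, j) = ((⟨k, by omega⟩ : Fin (m+1)), (⟨l, by omega⟩ : Fin (m+1))) := by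
  intro i j hc hv
  have hik : (i:ℕ) = k := by
    rcases hc with hx | hx
    · exact hx
    · by_cases hik : (i:ℕ) = k
      · exact hik
      · exfalso
        rw [show j = ⟨l+1, by omega⟩ from Fin.ext (by simp only [Fin.val_mk]; omega),
          colCharB k l m hm F hF hda i hik] at hv
        simp at hv
  rw [show i = ⟨k, by omega⟩ from Fin.ext hik] at hv ⊢
  by_cases hjl : (j:ℕ) = l
  · rw [show j = ⟨l, by omega⟩ from Fin.ext hjl]
  · exfalso
    by_cases hjl1 : (j:ℕ) = l + 1
    · rw [show j = ⟨l+1, by omega⟩ from Fin.ext hjl1, hda] at hv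
      simp at hv
    · rw [rowCharB k l m hm F hF hcB j hjl hjl1] at hv
      simp at hv

end Rounds

end WW
namespace WW

section InsA

variable (k l m : ℕ) (G : Fin m → Fin m → Option MSym)

lemma vA1 (hm : m = k + 1 + l) : ∀ i j : Fin (m+1), (i:ℕ) = k+1 → (j:ℕ) = l →
    insT m (k+1) (rowA l) (colA k) G i j = some MSym.b := by
  intro i j hi hj
  rw [insT_row m (k+1) _ _ G _ _ (by omega) hi]
  simp [rowA, hj]

lemma vA2 (hm : m = k + 1 + l) : ∀ i j : Fin (m+1), (i:ℕ) = k+1 → (j:ℕ) ≠ l →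
    insT m (k+1) (rowA l) (colA k) G i j = none := by
  intro i j hi hj
  have := j.isLt
  rcases Nat.lt_or_ge ((i:ℕ) + (j:ℕ)) (m+1) with h | h
  · rw [insT_row m (k+1) _ _ G _ _ h hi]
    simp [rowA, hj]
  · exact insT_ge m (k+1) _ _ G _ _ h

lemma vA3 (hm : m = k + 1 + l) : ∀ i j : Fin (m+1), (i:ℕ) = k → (j:ℕ) = l →
    insT m (k+1) (rowA l) (colA k) G i j = some MSym.a := by
  intro i j hi hj
  rw [insT_col m (k+1) _ _ G _ _ (by omega) (by omega) (by omega)]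
  simp [colA, hi]

lemma vA4 (hm : m = k + 1 + l) : ∀ i j : Fin (m+1), (i:ℕ) ≠ k → (i:ℕ) ≠ k+1 → (j:ℕ) = l →
    insT m (k+1) (rowA l) (colA k) G i j = none := by
  intro i j hi hi1 hj
  have := i.isLt
  rcases Nat.lt_or_ge ((i:ℕ) + (j:ℕ)) (m+1) with h | h
  · rw [insT_col m (k+1) _ _ G _ _ h (by omega) (by omega)]
    simp [colA, hi]
  · exact insT_ge m (k+1) _ _ G _ _ h

lemma vA5 (hm : m = k + 1 + l) (hGd : G ⟨k, by omega⟩ ⟨l, by omega⟩ = some MSym.a) :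
    ∀ i j : Fin (m+1), (i:ℕ) = k → (j:ℕ) = l+1 →
    insT m (k+1) (rowA l) (colA k) G i j = some MSym.a := by
  intro i j hi hj
  rw [insT_off m (k+1) (by omega) _ _ G _ _ (by omega) (by omega) (by omega)]
  rw [show (⟨if (i:ℕ) < k+1 then (i:ℕ) else (i:ℕ) - 1, by split <;> omega⟩ : Fin m)
      = ⟨k, by omega⟩ from Fin.ext (by simp only [Fin.val_mk]; split <;> omega)]
  rw [show (⟨if (j:ℕ) < m - (k+1) then (j:ℕ) else (j:ℕ) - 1, by split <;> omega⟩ : Fin m)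
      = ⟨l, by omega⟩ from Fin.ext (by simp only [Fin.val_mk]; split <;> omega)]
  exact hGd

lemma insA_MCT (hm : m = k + 1 + l) (hG : IsMCT m G)
    (hGd : G ⟨k, by omega⟩ ⟨l, by omega⟩ = some MSym.a) :
    IsMCT (m+1) (insT m (k+1) (rowA l) (colA k) G) := by
  apply insT_isMCT m (k+1) (by omega) _ _ G hG
  · rw [show m - (k+1) = l from by omega]
    simp [rowA]
  · intro j hj
    rw [rowA]
    split <;> simp
  · intro i hi
    rw [colA]
    split <;> simp
  · intro i j hsum hc
    have hi := i.isLt; have hj := j.isLt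
    by_cases hx : (i:ℕ) = k + 1
    · have hjl : (j:ℕ) < l := by omega
      have hforced : ForcedEmpty (m+1) (insT m (k+1) (rowA l) (colA k) G) i j :=
        Or.inl ⟨⟨l, by omega⟩, by rw [Fin.lt_def]; simp only [Fin.val_mk]; omega,
          vA1 k l m G hm i ⟨l, by omega⟩ hx rfl⟩
      exact ⟨fun _ => vA2 k l m G hm i j hx (by omega), fun hn => absurd hforced hn⟩
    · have hjl : (j:ℕ) = l := by
        rcases hc with h | h
        · exact absurd h hx
        · omega
      by_cases hik2 : (i:ℕ) = k
      · have hnf : ¬ ForcedEmpty (m+1) (insT m (k+1) (rowA l) (colA k) G) i j := by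
          rintro (⟨j', hj', hb⟩ | ⟨i', hi', ha⟩)
          · have h1 := j'.isLt
            have h2 : (j:ℕ) < (j':ℕ) := hj'
            by_cases h3 : (j':ℕ) = l + 1
            · rw [vA5 k l m G hm hGd i j' hik2 h3] at hb
              simp at hb
            · rw [insT_ge m (k+1) _ _ G _ _ (by omega)] at hb
              simp at hb
          · have h1 := i'.isLt
            have h2 : (i:ℕ) < (i':ℕ) := hi'
            by_cases h3 : (i':ℕ) = k + 1
            · rw [vA1 k l m G hm i' j h3 hjl] at ha
              simp at ha
            · rw [insT_ge m (k+1) _ _ G _ _ (by omega)] at ha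
              simp at ha
        refine ⟨fun hf => absurd hf hnf, fun _ => ?_⟩
        have e1 : diagRow (m+1) (insT m (k+1) (rowA l) (colA k) G) i = some MSym.a := by
          rw [diagRow_eq (m+1) _ i ⟨l+1, by omega⟩ (by simp only [Fin.val_mk]; omega)]
          exact vA5 k l m G hm hGd i _ hik2 rfl
        have e2 : diagCol (m+1) (insT m (k+1) (rowA l) (colA k) G) j = some MSym.b := by
          rw [diagCol_eq (m+1) _ ⟨k+1, by omega⟩ j (by simp only [Fin.val_mk]; omega)]
          exact vA1 k l m G hm _ j rfl hjl
        rw [e1, e2]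
        exact Or.inl (vA3 k l m G hm i j hik2 hjl)
      · refine ⟨fun _ => vA4 k l m G hm i j hik2 hx hjl, fun hn => absurd (Or.inr
          ⟨⟨k, by omega⟩, by rw [Fin.lt_def]; simp only [Fin.val_mk]; omega,
            vA3 k l m G hm ⟨k, by omega⟩ j rfl hjl⟩) hn⟩

end InsA

section InsB

variable (k l m : ℕ) (G : Fin m → Fin m → Option MSym)

lemma vB1 (hm : m = k + 1 + l) : ∀ i j : Fin (m+1), (i:ℕ) = k → (j:ℕ) = l+1 →
    insT m k (rowB l) colB G i j = some MSym.a := by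
  intro i j hi hj
  rw [insT_row m k _ _ G _ _ (by omega) hi]
  simp [rowB, hj]

lemma vB2 (hm : m = k + 1 + l) : ∀ i j : Fin (m+1), (i:ℕ) = k → (j:ℕ) = l →
    insT m k (rowB l) colB G i j = some MSym.b := by
  intro i j hi hj
  rw [insT_row m k _ _ G _ _ (by omega) hi]
  simp [rowB, hj]

lemma vB3 (hm : m = k + 1 + l) : ∀ i j : Fin (m+1), (i:ℕ) = k → (j:ℕ) ≠ l → (j:ℕ) ≠ l+1 →
    insT m k (rowB l) colB G i j = none := by
  intro i j hi hj hj1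
  have := j.isLt
  rcases Nat.lt_or_ge ((i:ℕ) + (j:ℕ)) (m+1) with h | h
  · rw [insT_row m k _ _ G _ _ h hi]
    simp [rowB, hj, hj1]
  · exact insT_ge m k _ _ G _ _ h

lemma vB4 (hm : m = k + 1 + l) : ∀ i j : Fin (m+1), (i:ℕ) ≠ k → (j:ℕ) = l+1 →
    insT m k (rowB l) colB G i j = none := by
  intro i j hi hj
  have := i.isLt
  rcases Nat.lt_or_ge ((i:ℕ) + (j:ℕ)) (m+1) with h | h
  · rw [insT_col m k _ _ G _ _ h (by omega) (by omega)]
    simp [colB]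
  · exact insT_ge m k _ _ G _ _ h

lemma vB5 (hm : m = k + 1 + l) (hGd : G ⟨k, by omega⟩ ⟨l, by omega⟩ = some MSym.b) :
    ∀ i j : Fin (m+1), (i:ℕ) = k+1 → (j:ℕ) = l →
    insT m k (rowB l) colB G i j = some MSym.b := by
  intro i j hi hj
  rw [insT_off m k (by omega) _ _ G _ _ (by omega) (by omega) (by omega)]
  rw [show (⟨if (i:ℕ) < k then (i:ℕ) else (i:ℕ) - 1, by split <;> omega⟩ : Fin m)
      = ⟨k, by omega⟩ from Fin.ext (by simp only [Fin.val_mk]; split <;> omega)]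
  rw [show (⟨if (j:ℕ) < m - k then (j:ℕ) else (j:ℕ) - 1, by split <;> omega⟩ : Fin m)
      = ⟨l, by omega⟩ from Fin.ext (by simp only [Fin.val_mk]; split <;> omega)]
  exact hGd

lemma insB_MCT (hm : m = k + 1 + l) (hG : IsMCT m G)
    (hGd : G ⟨k, by omega⟩ ⟨l, by omega⟩ = some MSym.b) :
    IsMCT (m+1) (insT m k (rowB l) colB G) := by
  apply insT_isMCT m k (by omega) _ _ G hG
  · rw [show m - k = l + 1 from by omega]
    simp [rowB]
  · intro j hj
    rw [rowB]
    split
    · omega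
    · split <;> simp
  · intro i hi
    rw [colB]
    simp
  · intro i j hsum hc
    have hi := i.isLt; have hj := j.isLt
    by_cases hx : (i:ℕ) = k
    · by_cases hjl : (j:ℕ) = l
      · have hnf : ¬ ForcedEmpty (m+1) (insT m k (rowB l) colB G) i j := by
          rintro (⟨j', hj', hb⟩ | ⟨i', hi', ha⟩)
          · have h1 := j'.isLt
            have h2 : (j:ℕ) < (j':ℕ) := hj'
            by_cases h3 : (j':ℕ) = l + 1
            · rw [vB1 k l m G hm i j' hx h3] at hb
              simp at hb
            · rw [insT_ge m k _ _ G _ _ (by omega)] at hb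
              simp at hb
          · have h1 := i'.isLt
            have h2 : (i:ℕ) < (i':ℕ) := hi'
            by_cases h3 : (i':ℕ) = k + 1
            · rw [vB5 k l m G hm hGd i' j h3 hjl] at ha
              simp at ha
            · rw [insT_ge m k _ _ G _ _ (by omega)] at ha
              simp at ha
        refine ⟨fun hf => absurd hf hnf, fun _ => ?_⟩
        have e1 : diagRow (m+1) (insT m k (rowB l) colB G) i = some MSym.a := by
          rw [diagRow_eq (m+1) _ i ⟨l+1, by omega⟩ (by simp only [Fin.val_mk]; omega)]
          exact vB1 k l m G hm i _ hx rfl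
        have e2 : diagCol (m+1) (insT m k (rowB l) colB G) j = some MSym.b := by
          rw [diagCol_eq (m+1) _ ⟨k+1, by omega⟩ j (by simp only [Fin.val_mk]; omega)]
          exact vB5 k l m G hm hGd _ j rfl hjl
        rw [e1, e2]
        exact Or.inr (vB2 k l m G hm i j hx hjl)
      · have hjl2 : (j:ℕ) < l := by omega
        have hforced : ForcedEmpty (m+1) (insT m k (rowB l) colB G) i j :=
          Or.inl ⟨⟨l, by omega⟩, by rw [Fin.lt_def]; simp only [Fin.val_mk]; omega,
            vB2 k l m G hm i ⟨l, by omega⟩ hx rfl⟩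
        exact ⟨fun _ => vB3 k l m G hm i j hx hjl (by omega), fun hn => absurd hforced hn⟩
    · have hjl : (j:ℕ) = l + 1 := by
        rcases hc with h | h
        · exact absurd h hx
        · omega
      have hforced : ForcedEmpty (m+1) (insT m k (rowB l) colB G) i j :=
        Or.inr ⟨⟨k, by omega⟩, by rw [Fin.lt_def]; simp only [Fin.val_mk]; omega,
          vB1 k l m G hm ⟨k, by omega⟩ j rfl hjl⟩
      exact ⟨fun _ => vB4 k l m G hm i j hx hjl, fun hn => absurd hforced hn⟩

end InsB

end WW
namespace WW

section TypeBundles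

variable (k l m : ℕ) (X' X'' : List Letter)

lemma delA_type (hm : m = k + 1 + l) (hk : X'.length = k) (hl : X''.length = l)
    (F : Fin (m+1) → Fin (m+1) → Option MSym)
    (hT : typeWord (m+1) F = X' ++ [Letter.D, Letter.E] ++ X'') :
    typeWord m (delT m (k+1) F) = X' ++ [Letter.D] ++ X'' := by
  apply typeWord_delT_eq m (k+1) (by omega) F _ (by
    simp only [List.length_append, List.length_cons, List.length_nil]; omega)
  intro i h
  have h1 := diag_of_typeWord (m+1) F _ hT ((rI m (k+1) ⟨i, h⟩ : ℕ)) (rI m (k+1) ⟨i, h⟩).isLt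
  simp only [Fin.eta] at h1
  rw [h1]
  have h2 := listrelA X' X'' Letter.D Letter.E i (by omega)
  rw [← h2]
  apply getElem_idx_congr
  simp only [rI_val, Fin.val_mk]
  split <;> split <;> omega

lemma delB_type (hm : m = k + 1 + l) (hk : X'.length = k) (hl : X''.length = l)
    (F : Fin (m+1) → Fin (m+1) → Option MSym)
    (hT : typeWord (m+1) F = X' ++ [Letter.D, Letter.E] ++ X'') :
    typeWord m (delT m k F) = X' ++ [Letter.E] ++ X'' := by
  apply typeWord_delT_eq m k (by omega) F _ (by
    simp only [List.length_append, List.length_cons, List.length_nil]; omega)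
  intro i h
  have h1 := diag_of_typeWord (m+1) F _ hT ((rI m k ⟨i, h⟩ : ℕ)) (rI m k ⟨i, h⟩).isLt
  simp only [Fin.eta] at h1
  rw [h1]
  have h2 := listrelB X' X'' Letter.D Letter.E i (by omega)
  rw [← h2]
  apply getElem_idx_congr
  simp only [rI_val, Fin.val_mk]
  split <;> split <;> omega

lemma insA_type (hm : m = k + 1 + l) (hk : X'.length = k) (hl : X''.length = l)
    (G : Fin m → Fin m → Option MSym) (hG : IsMCT m G)
    (hGt : typeWord m G = X' ++ [Letter.D] ++ X'') :
    typeWord (m+1) (insT m (k+1) (rowA l) (colA k) G) = X' ++ [Letter.D, Letter.E] ++ X'' := by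
  apply typeWord_insT_eq m (k+1) (by omega) _ _ G hG.1 _ (by
    simp only [List.length_append, List.length_cons, List.length_nil]; omega)
  · rw [show m - (k+1) = l from by omega]
    rw [word_k1_E X' X'' Letter.D Letter.E (k+1) (by omega)
      (by simp only [List.length_append, List.length_cons, List.length_nil]; omega)]
    simp [rowA, symToLetter]
  · intro i
    have h1 := diag_of_typeWord m G _ hGt (i:ℕ) i.isLt
    simp only [Fin.eta] at h1
    rw [h1]
    have h2 := listrelA X' X'' Letter.D Letter.E (i:ℕ) (by have := i.isLt; omega)
    rw [← h2]
    symm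
    apply getElem_idx_congr
    simp only [rI_val]
    split <;> split <;> omega

lemma insB_type (hm : m = k + 1 + l) (hk : X'.length = k) (hl : X''.length = l)
    (G : Fin m → Fin m → Option MSym) (hG : IsMCT m G)
    (hGt : typeWord m G = X' ++ [Letter.E] ++ X'') :
    typeWord (m+1) (insT m k (rowB l) colB G) = X' ++ [Letter.D, Letter.E] ++ X'' := by
  apply typeWord_insT_eq m k (by omega) _ _ G hG.1 _ (by
    simp only [List.length_append, List.length_cons, List.length_nil]; omega)
  · rw [show m - k = l + 1 from by omega]
    rw [word_k_D X' X'' Letter.D Letter.E k hk.symm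
      (by simp only [List.length_append, List.length_cons, List.length_nil]; omega)]
    simp [rowB, symToLetter]
  · intro i
    have h1 := diag_of_typeWord m G _ hGt (i:ℕ) i.isLt
    simp only [Fin.eta] at h1
    rw [h1]
    have h2 := listrelB X' X'' Letter.D Letter.E (i:ℕ) (by have := i.isLt; omega)
    rw [← h2]
    symm
    apply getElem_idx_congr
    simp only [rI_val]
    split <;> split <;> omega

lemma delA_MCT (hm : m = k + 1 + l)
    (F : Fin (m+1) → Fin (m+1) → Option MSym) (hF : IsMCT (m+1) F)
    (hda : F ⟨k, by omega⟩ ⟨l+1, by omega⟩ = some MSym.a)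
    (hdb : F ⟨k+1, by omega⟩ ⟨l, by omega⟩ = some MSym.b)
    (hcA : F ⟨k, by omega⟩ ⟨l, by omega⟩ = some MSym.a) :
    IsMCT m (delT m (k+1) F) := by
  apply delT_isMCT m (k+1) (by omega) F hF
  · intro j hj
    rw [rowCharA k l m hm F hF hdb j (by omega)]
    simp
  · intro i hi
    rw [show (⟨m - (k+1), by omega⟩ : Fin (m+1)) = ⟨l, by omega⟩ from
      Fin.ext (by simp only [Fin.val_mk]; omega)]
    by_cases hik : (i:ℕ) = k
    · rw [show i = ⟨k, by omega⟩ from Fin.ext hik, hcA]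
      simp
    · rw [colCharA k l m hm F hF hcA i hik hi]
      simp

lemma delB_MCT (hm : m = k + 1 + l)
    (F : Fin (m+1) → Fin (m+1) → Option MSym) (hF : IsMCT (m+1) F)
    (hda : F ⟨k, by omega⟩ ⟨l+1, by omega⟩ = some MSym.a)
    (hdb : F ⟨k+1, by omega⟩ ⟨l, by omega⟩ = some MSym.b)
    (hcB : F ⟨k, by omega⟩ ⟨l, by omega⟩ = some MSym.b) :
    IsMCT m (delT m k F) := by
  apply delT_isMCT m k (by omega) F hF
  · intro j hj
    by_cases hjl : (j:ℕ) = l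
    · rw [show j = ⟨l, by omega⟩ from Fin.ext hjl, hcB]
      simp
    · rw [rowCharB k l m hm F hF hcB j hjl (by omega)]
      simp
  · intro i hi
    rw [show (⟨m - k, by omega⟩ : Fin (m+1)) = ⟨l+1, by omega⟩ from
      Fin.ext (by simp only [Fin.val_mk]; omega)]
    rw [colCharB k l m hm F hF hda i hi]
    simp

lemma wtA (hm : m = k + 1 + l) (α β : ℝ)
    (F : Fin (m+1) → Fin (m+1) → Option MSym) (hF : IsMCT (m+1) F)
    (hdb : F ⟨k+1, by omega⟩ ⟨l, by omega⟩ = some MSym.b)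
    (hcA : F ⟨k, by omega⟩ ⟨l, by omega⟩ = some MSym.a) :
    wt (m+1) α β F = α * β * wt m α β (delT m (k+1) F) := by
  apply wt_delT m (k+1) (by omega) α β F
    (((⟨k, by omega⟩ : Fin (m+1)), (⟨l, by omega⟩ : Fin (m+1))))
    (((⟨k+1, by omega⟩ : Fin (m+1)), (⟨l, by omega⟩ : Fin (m+1))))
    hcA (Or.inr (by simp only [Fin.val_mk]; omega))
    (uniqA_a k l m hm F hF hdb hcA)
    hdb (Or.inl rfl)
    (uniqA_b k l m hm F hF hdb hcA)

lemma wtB (hm : m = k + 1 + l) (α β : ℝ)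
    (F : Fin (m+1) → Fin (m+1) → Option MSym) (hF : IsMCT (m+1) F)
    (hda : F ⟨k, by omega⟩ ⟨l+1, by omega⟩ = some MSym.a)
    (hcB : F ⟨k, by omega⟩ ⟨l, by omega⟩ = some MSym.b) :
    wt (m+1) α β F = α * β * wt m α β (delT m k F) := by
  apply wt_delT m k (by omega) α β F
    (((⟨k, by omega⟩ : Fin (m+1)), (⟨l+1, by omega⟩ : Fin (m+1))))
    (((⟨k, by omega⟩ : Fin (m+1)), (⟨l, by omega⟩ : Fin (m+1))))
    hda (Or.inl rfl)
    (uniqB_a k l m hm F hF hda hcB)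
    hcB (Or.inl rfl)
    (uniqB_b k l m hm F hF hda hcB)

end TypeBundles

end WW
instance : Fintype MSym :=
  ⟨{MSym.a, MSym.b, MSym.x}, by intro x; cases x <;> simp⟩

namespace WW

lemma wordWeight_eq (α β : ℝ) (X : List Letter) (n : ℕ) (h : X.length = n) :
    wordWeight α β X = ∑ᶠ T : {F : Fin n → Fin n → Option MSym //
      IsMCT n F ∧ typeWord n F = X}, wt n α β T.1 := by
  subst h; rfl

end WW

open WW in
theorem wordWeight_DE' (α β : ℝ) (X' X'' : List Letter) :
    wordWeight α β (X' ++ [Letter.D, Letter.E] ++ X'') =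
      α * β * (wordWeight α β (X' ++ [Letter.D] ++ X'') +
        wordWeight α β (X' ++ [Letter.E] ++ X'')) := by
  classical
  obtain ⟨k, hk⟩ : ∃ k, X'.length = k := ⟨_, rfl⟩
  obtain ⟨l, hl⟩ : ∃ l, X''.length = l := ⟨_, rfl⟩
  obtain ⟨m, hm⟩ : ∃ m, m = k + 1 + l := ⟨_, rfl⟩
  have hDE : (X' ++ [Letter.D, Letter.E] ++ X'').length = m + 1 := by
    simp only [List.length_append, List.length_cons, List.length_nil]; omega
  have hD : (X' ++ [Letter.D] ++ X'').length = m := by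
    simp only [List.length_append, List.length_cons, List.length_nil]; omega
  have hE : (X' ++ [Letter.E] ++ X'').length = m := by
    simp only [List.length_append, List.length_cons, List.length_nil]; omega
  rw [wordWeight_eq α β _ _ hDE, wordWeight_eq α β _ _ hD, wordWeight_eq α β _ _ hE]
  letI : Fintype {F : Fin (m+1) → Fin (m+1) → Option MSym //
      IsMCT (m+1) F ∧ typeWord (m+1) F = X' ++ [Letter.D, Letter.E] ++ X''} := Fintype.ofFinite _
  letI : Fintype {F : Fin m → Fin m → Option MSym //
      IsMCT m F ∧ typeWord m F = X' ++ [Letter.D] ++ X''} := Fintype.ofFinite _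
  letI : Fintype {F : Fin m → Fin m → Option MSym //
      IsMCT m F ∧ typeWord m F = X' ++ [Letter.E] ++ X''} := Fintype.ofFinite _
  rw [finsum_eq_sum_of_fintype, finsum_eq_sum_of_fintype, finsum_eq_sum_of_fintype]
  rw [← Finset.sum_filter_add_sum_filter_not Finset.univ
    (fun T : {F : Fin (m+1) → Fin (m+1) → Option MSym //
      IsMCT (m+1) F ∧ typeWord (m+1) F = X' ++ [Letter.D, Letter.E] ++ X''} =>
        T.1 ⟨k, by omega⟩ ⟨l, by omega⟩ = some MSym.a) (fun T => wt (m+1) α β T.1)]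
  have hA : (Finset.filter (fun T : {F : Fin (m+1) → Fin (m+1) → Option MSym //
      IsMCT (m+1) F ∧ typeWord (m+1) F = X' ++ [Letter.D, Letter.E] ++ X''} =>
        T.1 ⟨k, by omega⟩ ⟨l, by omega⟩ = some MSym.a) Finset.univ).sum
        (fun T => wt (m+1) α β T.1) =
      ∑ G : {F : Fin m → Fin m → Option MSym //
        IsMCT m F ∧ typeWord m F = X' ++ [Letter.D] ++ X''},
          α * β * wt m α β G.1 := by
    refine Finset.sum_bij'
      (fun T hT => ⟨delT m (k+1) T.1, ?_, ?_⟩)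
      (fun G _ => ⟨insT m (k+1) (rowA l) (colA k) G.1, ?_, ?_⟩)
      (fun _ _ => Finset.mem_univ _) ?_ ?_ ?_ ?_
    · exact delA_MCT k l m hm T.1 T.2.1
        (diags_DE k l m hm X' X'' hk hl T.1 T.2.2).1
        (diags_DE k l m hm X' X'' hk hl T.1 T.2.2).2
        ((Finset.mem_filter.mp hT).2)
    · exact delA_type k l m X' X'' hm hk hl T.1 T.2.2
    · exact insA_MCT k l m G.1 hm G.2.1
        (symToLetter_D (diag_mid k l m hm X' X'' hk hl Letter.D G.1 G.2.2))
    · exact insA_type k l m X' X'' hm hk hl G.1 G.2.1 G.2.2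
    · intro G _
      exact Finset.mem_filter.mpr ⟨Finset.mem_univ _,
        vA3 k l m G.1 hm ⟨k, by omega⟩ ⟨l, by omega⟩ rfl rfl⟩
    · intro T hT
      apply Subtype.ext
      exact roundA k l m hm T.1 T.2.1
        (diags_DE k l m hm X' X'' hk hl T.1 T.2.2).2
        ((Finset.mem_filter.mp hT).2)
    · intro G _
      apply Subtype.ext
      exact delT_insT m (k+1) (by omega) _ _ G.1 G.2.1.1
    · intro T hT
      exact wtA k l m hm α β T.1 T.2.1
        (diags_DE k l m hm X' X'' hk hl T.1 T.2.2).2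
        ((Finset.mem_filter.mp hT).2)
  have hB : (Finset.filter (fun T : {F : Fin (m+1) → Fin (m+1) → Option MSym //
      IsMCT (m+1) F ∧ typeWord (m+1) F = X' ++ [Letter.D, Letter.E] ++ X''} =>
        ¬ (T.1 ⟨k, by omega⟩ ⟨l, by omega⟩ = some MSym.a)) Finset.univ).sum
        (fun T => wt (m+1) α β T.1) =
      ∑ G : {F : Fin m → Fin m → Option MSym //
        IsMCT m F ∧ typeWord m F = X' ++ [Letter.E] ++ X''},
          α * β * wt m α β G.1 := by
    have cornerb : ∀ T : {F : Fin (m+1) → Fin (m+1) → Option MSym //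
        IsMCT (m+1) F ∧ typeWord (m+1) F = X' ++ [Letter.D, Letter.E] ++ X''},
        ¬ (T.1 ⟨k, by omega⟩ ⟨l, by omega⟩ = some MSym.a) →
        T.1 ⟨k, by omega⟩ ⟨l, by omega⟩ = some MSym.b := by
      intro T hn
      rcases corner_ab k l m hm T.1 T.2.1
        (diags_DE k l m hm X' X'' hk hl T.1 T.2.2).1
        (diags_DE k l m hm X' X'' hk hl T.1 T.2.2).2 with h | h
      · exact absurd h hn
      · exact h
    refine Finset.sum_bij'
      (fun T hT => ⟨delT m k T.1, ?_, ?_⟩)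
      (fun G _ => ⟨insT m k (rowB l) colB G.1, ?_, ?_⟩)
      (fun _ _ => Finset.mem_univ _) ?_ ?_ ?_ ?_
    · exact delB_MCT k l m hm T.1 T.2.1
        (diags_DE k l m hm X' X'' hk hl T.1 T.2.2).1
        (diags_DE k l m hm X' X'' hk hl T.1 T.2.2).2
        (cornerb T ((Finset.mem_filter.mp hT).2))
    · exact delB_type k l m X' X'' hm hk hl T.1 T.2.2
    · exact insB_MCT k l m G.1 hm G.2.1
        (symToLetter_E (diag_mid k l m hm X' X'' hk hl Letter.E G.1 G.2.2))
    · exact insB_type k l m X' X'' hm hk hl G.1 G.2.1 G.2.2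
    · intro G _
      refine Finset.mem_filter.mpr ⟨Finset.mem_univ _, ?_⟩
      dsimp only
      rw [vB2 k l m G.1 hm ⟨k, by omega⟩ ⟨l, by omega⟩ rfl rfl]
      simp
    · intro T hT
      apply Subtype.ext
      exact roundB k l m hm T.1 T.2.1
        (diags_DE k l m hm X' X'' hk hl T.1 T.2.2).1
        (cornerb T ((Finset.mem_filter.mp hT).2))
    · intro G _
      apply Subtype.ext
      exact delT_insT m k (by omega) _ _ G.1 G.2.1.1
    · intro T hT
      exact wtB k l m hm α β T.1 T.2.1
        (diags_DE k l m hm X' X'' hk hl T.1 T.2.2).1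
        (cornerb T ((Finset.mem_filter.mp hT).2))
  rw [hA, hB, ← Finset.mul_sum, ← Finset.mul_sum]
  ring

/-- If X = X'·D·E·X'' then weight(X) = αβ·(weight(X'·D·X'') + weight(X'·E·X'')). -/
theorem wordWeight_DE (α β : ℝ) (X' X'' : List Letter) :
    wordWeight α β (X' ++ [Letter.D, Letter.E] ++ X'') =
      α * β * (wordWeight α β (X' ++ [Letter.D] ++ X'') +
        wordWeight α β (X' ++ [Letter.E] ++ X'')) := by
  exact wordWeight_DE' α β X' X''
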